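/- Let n ≥ 2, a > 0, and let c be the uniform-node matrix c_{ij} = 1/(n−1) for i ≠ j and c_{ii} = 0. If real numbers ρ¹,…,ρⁿ and q¹,…,qⁿ satisfy, for every i, ρⁱ + (√2/(a√π))·qⁱ = ∑_{j=1}^n c_{ij} (ρʲ − (√2/(a√π))·qʲ), then ∑_{i=1}^n qⁱ = 0 and for all i, j one has ρⁱ + (√2/(a√π))·((n−2)/n)·qⁱ = ρʲ + (√2/(a√π))·((n−2)/n)·qʲ. -/

import Mathlib

/-- Full-moment coupling at a uniform node (unbounded velocities):
flux conservation and invariance of ρ + (√2/(a√π))·((n−2)/n)·q. -/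
theorem fullmoment_coupling_unbounded_uniform (n : ℕ) (hn : 2 ≤ n) (a : ℝ) (ha : 0 < a)
    (c : Fin n → Fin n → ℝ)
    (hc : ∀ i j, c i j = if i = j then 0 else 1 / ((n : ℝ) - 1))
    (ρ q : Fin n → ℝ)
    (h : ∀ i, ρ i + (Real.sqrt 2 / (a * Real.sqrt Real.pi)) * q i =
      ∑ j, c i j * (ρ j - (Real.sqrt 2 / (a * Real.sqrt Real.pi)) * q j)) :
    (∑ i, q i = 0) ∧
    ∀ i j, ρ i + (Real.sqrt 2 / (a * Real.sqrt Real.pi)) * (((n : ℝ) - 2) / n) * q i =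
           ρ j + (Real.sqrt 2 / (a * Real.sqrt Real.pi)) * (((n : ℝ) - 2) / n) * q j := by
  set K : ℝ := Real.sqrt 2 / (a * Real.sqrt Real.pi) with hKdef
  have hK : 0 < K := by
    apply div_pos (Real.sqrt_pos.mpr (by norm_num))
    exact mul_pos ha (Real.sqrt_pos.mpr Real.pi_pos)
  have hn2 : (2:ℝ) ≤ (n:ℝ) := by exact_mod_cast hn
  have hn1ne : ((n:ℝ) - 1) ≠ 0 := by linarith
  have hnne : ((n:ℝ)) ≠ 0 := by linarith
  set X : Fin n → ℝ := fun j => ρ j - K * q j with hX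
  have key : ∀ i, (n:ℝ) * ρ i + ((n:ℝ) - 2) * K * q i
      = (∑ j, ρ j) - K * ∑ j, q j := by
    intro i
    have hsum : ∑ j, c i j * X j = (1 / ((n:ℝ) - 1)) * ((∑ j, X j) - X i) := by
      have h1 : ∑ j, c i j * X j
          = ∑ j, ((1 / ((n:ℝ) - 1)) * X j - (if i = j then (1 / ((n:ℝ) - 1)) * X j else 0)) := by
        apply Finset.sum_congr rfl
        intro j _
        rw [hc i j]
        by_cases hij : i = j <;> simp [hij]
      rw [h1, Finset.sum_sub_distrib, Finset.sum_ite_eq, ← Finset.mul_sum]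
      simp [mul_sub]
    have h2 := h i
    rw [hsum] at h2
    have h3 : ((n:ℝ) - 1) * (ρ i + K * q i) = (∑ j, X j) - X i := by
      field_simp at h2
      linarith [h2]
    have hXsum : (∑ j, X j) = (∑ j, ρ j) - K * ∑ j, q j := by
      simp [hX, Finset.sum_sub_distrib, Finset.mul_sum]
    rw [hXsum] at h3
    simp only [hX] at h3
    ring_nf at h3 ⊢
    linarith
  have hqsum : ∑ i, q i = 0 := by
    have hs : ∑ i, ((n:ℝ) * ρ i + ((n:ℝ) - 2) * K * q i)
        = (n:ℝ) * ((∑ j, ρ j) - K * ∑ j, q j) := by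
      rw [Finset.sum_congr rfl (fun i _ => key i)]
      simp [Finset.card_univ, mul_comm]
      ring
    have hs2 : (n:ℝ) * (∑ i, ρ i) + ((n:ℝ) - 2) * K * (∑ i, q i)
        = (n:ℝ) * ((∑ j, ρ j) - K * ∑ j, q j) := by
      rw [← hs, Finset.sum_add_distrib, ← Finset.mul_sum, ← Finset.mul_sum]
    have : (2 * (n:ℝ) - 2) * K * (∑ i, q i) = 0 := by ring_nf; ring_nf at hs2; linarith
    have hne : (2 * (n:ℝ) - 2) * K ≠ 0 := by
      apply mul_ne_zero _ (ne_of_gt hK); linarith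
    exact (mul_eq_zero.mp this).resolve_left hne
  refine ⟨hqsum, fun i j => ?_⟩
  have ki := key i
  have kj := key j
  have hi : ρ i + K * (((n:ℝ) - 2) / n) * q i = ((∑ j, ρ j) - K * ∑ j, q j) / n := by
    field_simp
    linarith [ki]
  have hj : ρ j + K * (((n:ℝ) - 2) / n) * q j = ((∑ j, ρ j) - K * ∑ j, q j) / n := by
    field_simp
    linarith [kj]
  rw [hi, hj]
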